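/- Let D = [[λ, 1], [0, λ]] with 0 < |λ| < 1. Then there exists a real s > 0 and a branch of the matrix logarithm L of D such that ‖e^{sL}‖₂ > 1; i.e., the continuous powers D^s = e^{s log D} exhibit transient growth. -/

import Mathlib

open scoped Matrix
open Complex Real

/-- The numerical range of a square complex matrix. -/
def numRange {N : ℕ} (M : Matrix (Fin N) (Fin N) ℂ) : Set ℂ :=
  {z | ∃ x : EuclideanSpace ℂ (Fin N), ‖x‖ = 1 ∧ star (x : Fin N → ℂ) ⬝ᵥ M.mulVec x = z}

/-- The numerical abscissa of a square complex matrix. -/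
noncomputable def numAbs {N : ℕ} (M : Matrix (Fin N) (Fin N) ℂ) : ℝ :=
  sSup {r : ℝ | ∃ x : EuclideanSpace ℂ (Fin N), ‖x‖ = 1 ∧ (star (x : Fin N → ℂ) ⬝ᵥ M.mulVec x).re = r}

/-- The spectral (operator 2-)norm of a square complex matrix. -/
noncomputable def spec2 {N : ℕ} (M : Matrix (Fin N) (Fin N) ℂ) : ℝ :=
  ‖Matrix.toEuclideanCLM (𝕜 := ℂ) M‖

/-- The squared Frobenius norm of a square complex matrix. -/
noncomputable def frobSq {N : ℕ} (M : Matrix (Fin N) (Fin N) ℂ) : ℝ :=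
  ∑ i, ∑ j, ‖M i j‖ ^ 2

lemma exp_aux (a b : ℂ) :
    NormedSpace.exp (a • (1 : Matrix (Fin 2) (Fin 2) ℂ) + !![0, b; 0, 0]) =
      Complex.exp a • !![1, b; 0, 1] := by
  letI : SeminormedRing (Matrix (Fin 2) (Fin 2) ℂ) := Matrix.linftyOpSemiNormedRing
  letI : NormedRing (Matrix (Fin 2) (Fin 2) ℂ) := Matrix.linftyOpNormedRing
  letI : NormedAlgebra ℂ (Matrix (Fin 2) (Fin 2) ℂ) := Matrix.linftyOpNormedAlgebra
  set N : Matrix (Fin 2) (Fin 2) ℂ := !![0, b; 0, 0] with hNdef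
  have hN : N ^ 2 = 0 := by
    ext i j
    fin_cases i <;> fin_cases j <;>
      simp [hNdef, pow_two, Matrix.mul_apply, Fin.sum_univ_two]
  have hcomm : Commute (a • (1 : Matrix (Fin 2) (Fin 2) ℂ)) N :=
    (Commute.one_left N).smul_left a
  rw [Matrix.exp_add_of_commute _ _ hcomm]
  have h1 : NormedSpace.exp (a • (1 : Matrix (Fin 2) (Fin 2) ℂ)) = Complex.exp a • 1 := by
    have h := NormedSpace.algebraMap_exp_comm (𝕂 := ℂ) (𝔸 := Matrix (Fin 2) (Fin 2) ℂ) a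
    rw [Algebra.algebraMap_eq_smul_one, Algebra.algebraMap_eq_smul_one] at h
    rw [Complex.exp_eq_exp_ℂ]; exact h.symm
  have h2 : NormedSpace.exp N = 1 + N := by
    rw [NormedSpace.exp_eq_tsum ℂ]
    have hz : ∀ n ∉ Finset.range 2, ((Nat.factorial n : ℂ)⁻¹ • N ^ n) = (0 : Matrix (Fin 2) (Fin 2) ℂ) := by
      intro n hn
      rw [Finset.mem_range, not_lt] at hn
      have : N ^ n = 0 := pow_eq_zero_of_le hn hN
      simp [this]
    show (∑' n : ℕ, (Nat.factorial n : ℂ)⁻¹ • N ^ n) = 1 + N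
    rw [tsum_eq_sum hz]
    simp [Finset.sum_range_succ]
  rw [h1, h2, smul_mul_assoc, one_mul]
  congr 1
  ext i j
  fin_cases i <;> fin_cases j <;> simp [hNdef]

lemma col_le_spec2 (M : Matrix (Fin 2) (Fin 2) ℂ)
    (j : Fin 2) : Real.sqrt (∑ i, ‖M i j‖ ^ 2) ≤ spec2 M := by
  set T := Matrix.toEuclideanCLM (𝕜 := ℂ) M with hT
  set x : EuclideanSpace ℂ (Fin 2) := EuclideanSpace.single j 1 with hx
  have hx1 : ‖x‖ = 1 := by simp [hx]
  have h1 : ‖T x‖ ≤ spec2 M := by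
    calc ‖T x‖ ≤ ‖T‖ * ‖x‖ := T.le_opNorm x
    _ = spec2 M := by rw [hx1, mul_one, hT]; rfl
  have h2 : T x = (WithLp.equiv 2 _).symm (M.mulVec (Pi.single j 1)) := by
    rw [hx]
    show T ((WithLp.equiv 2 _).symm (Pi.single j 1)) = _
    rw [hT]
    rfl
  rw [h2] at h1
  refine le_trans (le_of_eq ?_) h1
  rw [EuclideanSpace.norm_eq]
  congr 1
  refine Finset.sum_congr rfl fun i _ => ?_
  simp [Matrix.mulVec_single]

/-- For D = [[λ,1],[0,λ]] with 0 < |λ| < 1, some continuous power D^s = e^{sL}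
(for a branch L of the matrix logarithm of D) has spectral norm exceeding 1. -/
theorem stmt13 (lam : ℂ) (h0 : 0 < ‖lam‖) (h1 : ‖lam‖ < 1) :
    ∃ s : ℝ, 0 < s ∧ ∃ L : Matrix (Fin 2) (Fin 2) ℂ,
      NormedSpace.exp L = !![lam, 1; 0, lam] ∧
        1 < spec2 (NormedSpace.exp ((s : ℂ) • L)) := by
  have hlam0 : lam ≠ 0 := by
    intro h; rw [h] at h0; simp at h0
  set r := ‖lam‖ with hr
  set Lg : ℝ := -Real.log r with hLgdef
  have hLg : 0 < Lg := by
    have := Real.log_neg h0 h1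
    simp [hLgdef]; linarith
  set s : ℝ := 1 / Lg with hsdef
  have hs : 0 < s := by positivity
  refine ⟨s, hs, Complex.log lam • 1 + !![0, lam⁻¹; 0, 0], ?_, ?_⟩
  · rw [exp_aux, Complex.exp_log hlam0]
    ext i j
    fin_cases i <;> fin_cases j <;> simp [mul_inv_cancel₀ hlam0]
  · have hsmul : (s : ℂ) • (Complex.log lam • 1 + !![0, lam⁻¹; 0, 0]) =
        ((s : ℂ) * Complex.log lam) • (1 : Matrix (Fin 2) (Fin 2) ℂ) +
          !![0, (s : ℂ) * lam⁻¹; 0, 0] := by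
      rw [smul_add, smul_smul]
      congr 1
      ext i j
      fin_cases i <;> fin_cases j <;> simp
    rw [hsmul, exp_aux]
    refine lt_of_lt_of_le ?_
      (col_le_spec2 (Complex.exp ((s : ℂ) * Complex.log lam) • !![1, (s : ℂ) * lam⁻¹; 0, 1]) 1)
    have hlog : Real.log r = -Lg := by rw [hLgdef]; ring
    have hre : ((s : ℂ) * Complex.log lam).re = -1 := by
      simp [Complex.log_re, ← hr]
      rw [hsdef, hlog]
      field_simp
    have hsum : (∑ i, ‖((Complex.exp ((s : ℂ) * Complex.log lam) •
        !![1, (s : ℂ) * lam⁻¹; 0, 1]) : Matrix (Fin 2) (Fin 2) ℂ) i 1‖ ^ 2) =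
        Real.exp (-1) ^ 2 * ((s * r⁻¹) ^ 2 + 1) := by
      rw [Fin.sum_univ_two]
      have ha : (!![1, (s : ℂ) * lam⁻¹; 0, 1] : Matrix (Fin 2) (Fin 2) ℂ) 0 1
          = (s : ℂ) * lam⁻¹ := rfl
      have hb : (!![1, (s : ℂ) * lam⁻¹; 0, 1] : Matrix (Fin 2) (Fin 2) ℂ) 1 1 = 1 := rfl
      simp only [Matrix.smul_apply, smul_eq_mul, ha, hb, norm_mul]
      rw [Complex.norm_exp, hre]
      have h3 : ‖((s : ℝ) : ℂ)‖ = s := by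
        rw [Complex.norm_real, Real.norm_eq_abs, abs_of_pos hs]
      have h4 : ‖lam⁻¹‖ = r⁻¹ := by
        rw [norm_inv, ← hr]
      rw [h3, h4, norm_one]
      ring
    rw [hsum]
    have hrexp : r = Real.exp (-Lg) := by rw [← hlog, Real.exp_log h0]
    have hrinv : r⁻¹ = Real.exp Lg := by rw [hrexp, ← Real.exp_neg, neg_neg]
    have key : Real.exp 1 ≤ s * r⁻¹ := by
      rw [hsdef, hrinv]
      have h := Real.add_one_le_exp (Lg - 1)
      have h2 : Real.exp (Lg - 1) = Real.exp Lg / Real.exp 1 := by rw [Real.exp_sub]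
      rw [h2] at h
      have h3 : Lg * Real.exp 1 ≤ Real.exp Lg := by
        rw [← le_div_iff₀ (Real.exp_pos 1)]
        linarith
      rw [div_mul_eq_mul_div, one_mul, le_div_iff₀ hLg]
      nlinarith
    have hA : Real.exp (-1) = (Real.exp 1)⁻¹ := Real.exp_neg 1
    refine (Real.lt_sqrt (by positivity)).mpr ?_
    rw [one_pow, hA]
    have hApos := Real.exp_pos 1
    have h4 : ((Real.exp 1)⁻¹) ^ 2 * (Real.exp 1) ^ 2 = 1 := by field_simp
    have h5 : Real.exp 1 ^ 2 ≤ (s * r⁻¹) ^ 2 := by nlinarith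
    have h6 : (0:ℝ) < ((Real.exp 1)⁻¹) ^ 2 := by positivity
    nlinarith [mul_le_mul_of_nonneg_left h5 (sq_nonneg ((Real.exp 1)⁻¹))]
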